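/- Let U = (U_1, …, U_n) be a tuple of convex sets in ℝ^d and define X = (X_1, …, X_n) by X_i := closure(U_i). If c is a codeword of code(X) that is not a codeword of code(U), then the intersection ⋂_{i ∈ c} X_i has empty interior. -/
import Mathlib


open Set Filter Topology

noncomputable section

/-- The intersection pattern of a tuple of sets at a point. -/
def pattern {n : ℕ} {E : Type*} (X : Fin n → Set E) (p : E) : Set (Fin n) :=
  {i | p ∈ X i}

/-- The convex code of a tuple of sets. -/
def code {n : ℕ} {E : Type*} (X : Fin n → Set E) : Set (Set (Fin n)) :=
  Set.range (pattern X)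

/-- For a convex set `s` in a finite-dimensional space, `interior (closure s) = interior s`. -/
lemma convex_interior_closure {E : Type*} [NormedAddCommGroup E] [NormedSpace ℝ E]
    [FiniteDimensional ℝ E] {s : Set E} (hs : Convex ℝ s) :
    interior (closure s) = interior s := by
  refine subset_antisymm ?_ (interior_mono subset_closure)
  intro x hx
  -- interior s is nonempty
  have hclos : Convex ℝ (closure s) := hs.closure
  have h1 : affineSpan ℝ (closure s) = ⊤ :=
    hclos.interior_nonempty_iff_affineSpan_eq_top.mp ⟨x, hx⟩
  have hsub : closure s ⊆ (affineSpan ℝ s : Set E) :=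
    closure_minimal (subset_affineSpan _ _) (affineSpan ℝ s).closed_of_finiteDimensional
  have h2 : affineSpan ℝ s = ⊤ := by
    have := affineSpan_le.mpr hsub
    rw [h1] at this
    exact top_le_iff.mp this
  obtain ⟨y, hy⟩ := hs.interior_nonempty_iff_affineSpan_eq_top.mpr h2
  -- find z ∈ closure s slightly past x along the ray from y
  obtain ⟨ε, hε, hball⟩ := Metric.isOpen_iff.mp isOpen_interior x hx
  set δ : ℝ := ε / (2 * (dist x y + 1)) with hδdef
  have hdxy : (0:ℝ) < dist x y + 1 := by positivity
  have hδ : 0 < δ := by positivity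
  set z : E := x + δ • (x - y) with hz
  have hzmem : z ∈ closure s := by
    have : dist z x < ε := by
      have : dist z x = δ * ‖x - y‖ := by
        rw [hz, dist_eq_norm]
        simp [norm_smul, abs_of_pos hδ]
      rw [this]
      have hxy : ‖x - y‖ = dist x y := (dist_eq_norm x y).symm
      rw [hxy, hδdef]
      rw [div_mul_eq_mul_div, div_lt_iff₀ (by positivity)]
      nlinarith [dist_nonneg (x := x) (y := y)]
    exact interior_subset (hball (by simpa [Metric.mem_ball] using this))
  -- x is a convex combination of z ∈ closure s and y ∈ interior s
  have h1δ : (1 + δ) ≠ 0 := by positivity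
  have hx' : x = (1 / (1 + δ)) • z + (δ / (1 + δ)) • y := by
    rw [hz]
    match_scalars <;> field_simp <;> ring
  rw [hx']
  exact hs.combo_closure_interior_mem_interior hzmem hy (by positivity) (by positivity)
    (by field_simp)

/-- Let `U` be a tuple of convex sets in `ℝ^d` and let `X i := closure (U i)`.  If `c`
is a codeword of `code X` which is not a codeword of `code U`, then `⋂ i ∈ c, X i` has
empty interior. -/
theorem new_codewords_have_empty_interior {d n : ℕ}
    (U : Fin n → Set (EuclideanSpace ℝ (Fin d))) (hU : ∀ i, Convex ℝ (U i))
    (X : Fin n → Set (EuclideanSpace ℝ (Fin d))) (hX : ∀ i, X i = closure (U i))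
    (c : Set (Fin n)) (hc : c ∈ code X) (hc' : c ∉ code U) :
    interior (⋂ i ∈ c, X i) = ∅ := by
  by_contra h
  obtain ⟨q, hq⟩ := nonempty_iff_ne_empty.mpr h
  obtain ⟨p, hp⟩ := hc
  apply hc'
  have hqi : ∀ i ∈ c, q ∈ interior (U i) := by
    intro i hi
    have : q ∈ interior (X i) := interior_mono (biInter_subset_of_mem hi) hq
    rwa [hX i, convex_interior_closure (hU i)] at this
  have hpi : ∀ i ∈ c, p ∈ closure (U i) := by
    intro i hi
    have : i ∈ pattern X p := hp ▸ hi
    rwa [pattern, mem_setOf_eq, hX i] at this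
  have hpo : ∀ i ∉ c, p ∉ closure (U i) := by
    intro i hi hmem
    exact hi (hp ▸ (show i ∈ pattern X p by rw [pattern, mem_setOf_eq, hX i]; exact hmem))
  set V : Set (EuclideanSpace ℝ (Fin d)) := ⋂ i ∈ cᶜ, (closure (U i))ᶜ with hV
  have hVopen : IsOpen V :=
    (Set.toFinite cᶜ).isOpen_biInter (fun i _ => isClosed_closure.isOpen_compl)
  have hpV : p ∈ V := by
    rw [hV, mem_iInter₂]
    exact fun i hi => hpo i hi
  have hcont : ContinuousAt (fun t : ℝ => t • q + (1 - t) • p) 0 := by fun_prop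
  have hev : ∀ᶠ t in 𝓝 (0 : ℝ), (t • q + (1 - t) • p) ∈ V := by
    apply hcont.eventually_mem
    simpa using hVopen.mem_nhds hpV
  have hev' : ∀ᶠ t in 𝓝[>] (0 : ℝ), (t • q + (1 - t) • p) ∈ V ∧ t ∈ Ioo (0:ℝ) 1 :=
    (hev.filter_mono nhdsWithin_le_nhds).and
      (Filter.eventually_of_mem (Ioo_mem_nhdsGT_of_mem ⟨le_refl 0, one_pos⟩) (fun _ ht => ht))
  obtain ⟨t, htV, ht0, ht1⟩ := hev'.exists
  set r : EuclideanSpace ℝ (Fin d) := t • q + (1 - t) • p with hr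
  refine ⟨r, ?_⟩
  ext i
  simp only [pattern, mem_setOf_eq]
  constructor
  · intro hri
    by_contra hic
    have : r ∈ (closure (U i))ᶜ := by
      have := mem_iInter₂.mp htV i hic
      exact this
    exact this (subset_closure hri)
  · intro hic
    have : r ∈ interior (U i) :=
      (hU i).combo_interior_closure_mem_interior (hqi i hic) (hpi i hic) ht0
        (by linarith) (by ring)
    exact interior_subset this
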